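/- Let d1, d2 be positive natural numbers with d = d1 + d2, let s ≥ d, let δt > 0 and ε > 0 be real numbers, and let Λ be the d×d block-diagonal matrix δt·diag(I_{d1}, (1/ε²)·I_{d2}). Let U be an s×d real matrix with orthonormal columns (UᵀU = I_d), Σ an invertible d×d diagonal matrix, V a d×d orthogonal matrix (VᵀV = I_d), and set A = UΣVᵀ and M = UΣ⁻¹VᵀΛ⁻¹VΣ⁻¹Uᵀ. Then for all θ̄_1, θ̄_2 ∈ ℝ^{d1} and η̄_1, η̄_2 ∈ ℝ^{d2}, with x̄_i = (θ̄_i, η̄_i) and z_i = A·x̄_i, (1/2)·(z_1 − z_2)ᵀ·(M + M)·(z_1 − z_2) = (1/δt)·( ‖θ̄_1 − θ̄_2‖² + ε²·‖η̄_1 − η̄_2‖² ). -/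

import Mathlib

open Matrix

/-- Appendix C combined with Proposition 1: for linear measurements `zᵢ = A·x̄ᵢ`
of hidden variables `x̄ᵢ = (θᵢ, ηᵢ)` with increment covariance
`Λ = δt·diag(I, (1/ε²)I)`, the modified Mahalanobis distance computed with the
pseudo-inverse `M = UΣ⁻¹VᵀΛ⁻¹VΣ⁻¹Uᵀ` equals
`(1/δt)(‖θ₁−θ₂‖² + ε²‖η₁−η₂‖²)`. -/
theorem stmt_11 (d1 d2 s : ℕ) (hd1 : 0 < d1) (hd2 : 0 < d2) (hds : d1 + d2 ≤ s)
    (δt ε : ℝ) (hδt : 0 < δt) (hε : 0 < ε)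
    (U : Matrix (Fin s) (Fin d1 ⊕ Fin d2) ℝ) (hU : Uᵀ * U = 1)
    (Sig : Matrix (Fin d1 ⊕ Fin d2) (Fin d1 ⊕ Fin d2) ℝ)
    (hSigDiag : Sig.IsDiag) (hSig : IsUnit Sig.det)
    (V : Matrix (Fin d1 ⊕ Fin d2) (Fin d1 ⊕ Fin d2) ℝ) (hV : Vᵀ * V = 1) :
    let Λ : Matrix (Fin d1 ⊕ Fin d2) (Fin d1 ⊕ Fin d2) ℝ :=
      δt • Matrix.fromBlocks 1 0 0 ((1 / ε ^ 2) • 1)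
    let A := U * Sig * Vᵀ
    let M := U * Sig⁻¹ * Vᵀ * Λ⁻¹ * V * Sig⁻¹ * Uᵀ
    ∀ (θ₁ θ₂ : EuclideanSpace ℝ (Fin d1)) (η₁ η₂ : EuclideanSpace ℝ (Fin d2)),
      (1 / 2) *
          ((A *ᵥ Sum.elim (fun k => θ₁ k) (fun k => η₁ k)
              - A *ᵥ Sum.elim (fun k => θ₂ k) (fun k => η₂ k)) ⬝ᵥ
            ((M + M) *ᵥ
              (A *ᵥ Sum.elim (fun k => θ₁ k) (fun k => η₁ k)
                - A *ᵥ Sum.elim (fun k => θ₂ k) (fun k => η₂ k)))) =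
        (1 / δt) * (‖θ₁ - θ₂‖ ^ 2 + ε ^ 2 * ‖η₁ - η₂‖ ^ 2) := by
  intro Λ A M θ₁ θ₂ η₁ η₂
  have hε2 : (ε : ℝ) ^ 2 ≠ 0 := pow_ne_zero _ hε.ne'
  have hδt' : (δt : ℝ) ≠ 0 := hδt.ne'
  set N : Matrix (Fin d1 ⊕ Fin d2) (Fin d1 ⊕ Fin d2) ℝ :=
    δt⁻¹ • Matrix.fromBlocks 1 0 0 (ε ^ 2 • 1) with hN
  have hΛN : Λ * N = 1 := by
    show (δt • Matrix.fromBlocks 1 0 0 ((1 / ε ^ 2) • (1 : Matrix (Fin d2) (Fin d2) ℝ))) * N = 1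
    rw [hN, Matrix.smul_mul, Matrix.mul_smul, smul_smul, mul_inv_cancel₀ hδt',
      Matrix.fromBlocks_multiply]
    simp [smul_smul, one_div, inv_mul_cancel₀ hε2, mul_inv_cancel₀ hε2, Matrix.fromBlocks_one]
  have hΛinv : Λ⁻¹ = N := Matrix.inv_eq_right_inv hΛN
  have hVV : V * Vᵀ = 1 := mul_eq_one_comm.mp hV
  have hSigT : Sigᵀ = Sig := by
    ext i j
    by_cases h : i = j
    · subst h; rfl
    · rw [Matrix.transpose_apply, hSigDiag h, hSigDiag (Ne.symm h)]
  have hS1 : Sig * Sig⁻¹ = 1 := Matrix.mul_nonsing_inv _ hSig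
  have hS2 : Sig⁻¹ * Sig = 1 := Matrix.nonsing_inv_mul _ hSig
  have hAMA : Aᵀ * M * A = N := by
    show (U * Sig * Vᵀ)ᵀ * (U * Sig⁻¹ * Vᵀ * Λ⁻¹ * V * Sig⁻¹ * Uᵀ) * (U * Sig * Vᵀ) = N
    rw [hΛinv]
    simp only [Matrix.transpose_mul, Matrix.transpose_transpose, hSigT, ← Matrix.mul_assoc]
    rw [Matrix.mul_assoc (V * Sig) Uᵀ U, hU, Matrix.mul_one,
      Matrix.mul_assoc V Sig Sig⁻¹, hS1, Matrix.mul_one, hVV, Matrix.one_mul,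
      Matrix.mul_assoc (N * V * Sig⁻¹) Uᵀ U, hU, Matrix.mul_one,
      Matrix.mul_assoc (N * V) Sig⁻¹ Sig, hS2, Matrix.mul_one,
      Matrix.mul_assoc N V Vᵀ, hVV, Matrix.mul_one]
  set dθ : Fin d1 → ℝ := fun k => θ₁ k - θ₂ k with hdθ
  set dη : Fin d2 → ℝ := fun k => η₁ k - η₂ k with hdη
  set x : Fin d1 ⊕ Fin d2 → ℝ := Sum.elim dθ dη with hx
  have hsub : Sum.elim (fun k => θ₁ k) (fun k => η₁ k)
      - Sum.elim (fun k => θ₂ k) (fun k => η₂ k) = x := by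
    funext i; cases i <;> rfl
  rw [← Matrix.mulVec_sub, hsub, Matrix.add_mulVec, dotProduct_add]
  have key : (A *ᵥ x) ⬝ᵥ (M *ᵥ (A *ᵥ x)) = x ⬝ᵥ (N *ᵥ x) := by
    rw [Matrix.mulVec_mulVec, dotProduct_comm, Matrix.dotProduct_mulVec,
      ← Matrix.mulVec_transpose, Matrix.mulVec_mulVec, ← Matrix.mul_assoc, hAMA,
      dotProduct_comm]
  rw [key]
  have hNx : x ⬝ᵥ (N *ᵥ x) = δt⁻¹ * (dθ ⬝ᵥ dθ + ε ^ 2 * (dη ⬝ᵥ dη)) := by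
    rw [hN, Matrix.smul_mulVec, dotProduct_smul, smul_eq_mul]
    congr 1
    rw [hx]
    have : Matrix.fromBlocks (1 : Matrix (Fin d1) (Fin d1) ℝ) 0 0
        (ε ^ 2 • (1 : Matrix (Fin d2) (Fin d2) ℝ)) *ᵥ Sum.elim dθ dη
        = Sum.elim dθ (ε ^ 2 • dη) := by
      rw [Matrix.fromBlocks_mulVec]
      simp [Matrix.smul_mulVec]
    rw [this, sumElim_dotProduct_sumElim, dotProduct_smul, smul_eq_mul]
  rw [hNx]
  have hθ : ‖θ₁ - θ₂‖ ^ 2 = dθ ⬝ᵥ dθ := by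
    rw [EuclideanSpace.norm_eq, Real.sq_sqrt (by positivity)]
    simp [dotProduct, hdθ, sq, PiLp.sub_apply]
  have hη : ‖η₁ - η₂‖ ^ 2 = dη ⬝ᵥ dη := by
    rw [EuclideanSpace.norm_eq, Real.sq_sqrt (by positivity)]
    simp [dotProduct, hdη, sq, PiLp.sub_apply]
  rw [hθ, hη]
  field_simp
  ring
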